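/- Let 𝔽 be ℝ or ℂ and let M₂(𝔽) be the algebra of 2×2 matrices over 𝔽, with matrix units E₁₁, E₁₂, E₂₁, E₂₂. If Φ : M₂(𝔽) → M₂(𝔽) is a surjective map satisfying [Φ(A), Φ(B)]₃ = [A, B]₃ for all A, B ∈ M₂(𝔽), then for every a ∈ 𝔽 there exist scalars c, μ ∈ 𝔽 such that Φ(a·E₁₂) = c·E₁₂ + μ·I. -/

import Mathlib

def bracket1 {R : Type*} [Ring R] (A B : R) : R := A * B - B * A
def bracket3 {R : Type*} [Ring R] (A B : R) : R := bracket1 (bracket1 (bracket1 A B) B) B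

lemma b3_right_sq_zero {R : Type*} [Ring R] {A B : R} (h : B * B = 0) :
    bracket3 A B = 0 := by
  have key : bracket3 A B =
      A*(B*B)*B - 3*(B*(A*(B*B))) + 3*((B*B)*(A*B)) - (B*B)*(B*A) := by
    unfold bracket3 bracket1; noncomm_ring
  rw [key, h]; simp

theorem stmt_18 {𝕜 : Type*} [RCLike 𝕜]
    (Φ : Matrix (Fin 2) (Fin 2) 𝕜 → Matrix (Fin 2) (Fin 2) 𝕜)
    (hsurj : Function.Surjective Φ)
    (hpres : ∀ A B : Matrix (Fin 2) (Fin 2) 𝕜, bracket3 (Φ A) (Φ B) = bracket3 A B) :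
    ∀ a : 𝕜, ∃ c mu : 𝕜,
      Φ (a • Matrix.single 0 1 (1 : 𝕜)) =
        c • Matrix.single 0 1 (1 : 𝕜) + mu • (1 : Matrix (Fin 2) (Fin 2) 𝕜) := by
  intro a
  have hN2 : (a • Matrix.single 0 1 (1 : 𝕜)) * (a • Matrix.single 0 1 (1 : 𝕜))
      = (0 : Matrix (Fin 2) (Fin 2) 𝕜) := by
    ext i j
    fin_cases i <;> fin_cases j <;>
      simp [Matrix.mul_apply, Fin.sum_univ_two, Matrix.single]
  set M := Φ (a • Matrix.single 0 1 (1 : 𝕜)) with hMdef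
  have h1 : ∀ X, bracket3 X M = 0 := by
    intro X
    obtain ⟨A, rfl⟩ := hsurj X
    rw [hMdef, hpres]
    exact b3_right_sq_zero hN2
  set u : 𝕜 := M 0 0 with hu_def
  set y : 𝕜 := M 0 1 with hy_def
  set z : 𝕜 := M 1 0 with hz_def
  set v : 𝕜 := M 1 1 with hv_def
  have hA := congrFun (congrFun (h1 (Matrix.single 0 0 (1:𝕜))) 0) 1
  have hB := congrFun (congrFun (h1 (Matrix.single 0 0 (1:𝕜))) 1) 0
  have hC := congrFun (congrFun (h1 (Matrix.single 0 1 (1:𝕜))) 0) 1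
  simp only [bracket3, bracket1, Matrix.sub_apply, Matrix.mul_apply, Fin.sum_univ_two,
    Matrix.single, Matrix.of_apply, Matrix.zero_apply, ← hu_def, ← hy_def, ← hz_def,
    ← hv_def] at hA hB hC
  norm_num at hA hB hC
  have hA' : y * ((u - v)^2 + 4 * (y * z)) = 0 := by linear_combination hA
  have hC' : (u - v) * ((u - v)^2 + 4 * (y * z)) = 0 := by linear_combination -hC
  have hD : (u - v)^2 + 4 * (y * z) = 0 := by
    have hsq : ((u - v)^2 + 4 * (y * z)) * ((u - v)^2 + 4 * (y * z)) = 0 := by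
      linear_combination (u - v) * hC' + 4 * z * hA'
    exact mul_self_eq_zero.mp hsq
  have hkey : z = 0 ∧ u = v := by
    by_cases ha : a = 0
    · obtain ⟨B, hB0⟩ := hsurj (Matrix.single 0 0 (1:𝕜))
      have h3 : bracket3 M (Matrix.single 0 0 (1:𝕜)) = 0 := by
        rw [← hB0, hMdef, hpres, ha]
        simp [bracket3, bracket1]
      have e10 := congrFun (congrFun h3 1) 0
      simp only [bracket3, bracket1, Matrix.sub_apply, Matrix.mul_apply, Fin.sum_univ_two,
        Matrix.single, Matrix.of_apply, Matrix.zero_apply, ← hu_def, ← hy_def,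
        ← hz_def, ← hv_def] at e10
      norm_num at e10
      have hz0 : z = 0 := by linear_combination e10
      refine ⟨hz0, ?_⟩
      have h4 : (u - v) * (u - v) = 0 := by linear_combination hD - 4 * y * hz0
      exact sub_eq_zero.mp (mul_self_eq_zero.mp h4)
    · set Y := Φ (Matrix.single 0 0 (1:𝕜)) with hYdef
      have h2 : bracket3 M Y = bracket3 (a • Matrix.single 0 1 (1 : 𝕜))
          (Matrix.single 0 0 (1:𝕜)) := by
        rw [hMdef, hYdef]; exact hpres _ _
      set p : 𝕜 := Y 0 0 with hp_def
      set q : 𝕜 := Y 0 1 with hq_def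
      set r : 𝕜 := Y 1 0 with hr_def
      set s : 𝕜 := Y 1 1 with hs_def
      have E00 := congrFun (congrFun h2 0) 0
      have E01 := congrFun (congrFun h2 0) 1
      have E10 := congrFun (congrFun h2 1) 0
      simp only [bracket3, bracket1, Matrix.sub_apply, Matrix.mul_apply, Fin.sum_univ_two,
        Matrix.single, Matrix.smul_apply, Matrix.of_apply, Matrix.zero_apply,
        smul_eq_mul, ← hu_def, ← hy_def, ← hz_def, ← hv_def, ← hp_def, ← hq_def, ← hr_def,
        ← hs_def] at E00 E01 E10
      norm_num at E00 E01 E10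
      have E00' : (r * y - q * z) * ((p - s)^2 + 4 * (q * r)) = 0 := by linear_combination E00
      have E01' : ((u - v) * q - y * (p - s)) * ((p - s)^2 + 4 * (q * r)) = -a := by
        linear_combination E01
      have E10' : (z * (p - s) - (u - v) * r) * ((p - s)^2 + 4 * (q * r)) = 0 := by
        linear_combination E10
      have hΔne : ((p - s)^2 + 4 * (q * r)) ≠ 0 := by
        intro h0
        apply ha
        rw [h0, mul_zero] at E01'
        linear_combination E01'
      have e1 : r * y - q * z = 0 := by
        have h5 : (r * y - q * z) * ((p - s)^2 + 4 * (q * r))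
            = 0 * ((p - s)^2 + 4 * (q * r)) := by rw [zero_mul]; exact E00'
        exact mul_right_cancel₀ hΔne h5
      have e3 : z * (p - s) - (u - v) * r = 0 := by
        have h5 : (z * (p - s) - (u - v) * r) * ((p - s)^2 + 4 * (q * r))
            = 0 * ((p - s)^2 + 4 * (q * r)) := by rw [zero_mul]; exact E10'
        exact mul_right_cancel₀ hΔne h5
      have hzz : (z * z) * ((p - s)^2 + 4 * (q * r))
          = 0 * ((p - s)^2 + 4 * (q * r)) := by
        rw [zero_mul]
        linear_combination (z * (p - s) + (u - v) * r) * e3 - 4 * r * z * e1 + r * r * hD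
      have hz0 : z = 0 := mul_self_eq_zero.mp (mul_right_cancel₀ hΔne hzz)
      refine ⟨hz0, ?_⟩
      have h4 : (u - v) * (u - v) = 0 := by linear_combination hD - 4 * y * hz0
      exact sub_eq_zero.mp (mul_self_eq_zero.mp h4)
  obtain ⟨hz0, huv⟩ := hkey
  refine ⟨y, v, ?_⟩
  ext i j
  fin_cases i <;> fin_cases j <;>
    simp [Matrix.add_apply, Matrix.smul_apply, Matrix.one_apply, Matrix.single,
      ← hu_def, ← hy_def, ← hz_def, ← hv_def, hz0, huv]
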